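/- Let p, q be probability measures on a finite measurable space with KL-divergence κ = KL(p;q). Then for any event E, q(E) ≥ p(E)·exp(−(κ + 1/e)/p(E)) (with the convention that the bound holds trivially when p(E) = 0). -/

import Mathlib

open Real Finset

/-- Termwise log-sum inequality helper. -/
lemma term_ineq (px qx c : ℝ) (hpx : 0 ≤ px) (hqx : 0 ≤ qx)
    (hacx : qx = 0 → px = 0) (hc : 0 < c) :
    px * Real.log c + px - qx * c ≤ px * Real.log (px / qx) := by
  rcases eq_or_lt_of_le hpx with h0 | hpos
  · rw [← h0]
    simp
    positivity
  · have hqpos : 0 < qx := lt_of_le_of_ne hqx fun h => by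
      have := hacx h.symm; linarith
    have ht : 0 < px / (qx * c) := by positivity
    have key := Real.one_sub_inv_le_log_of_pos ht
    have hlog : Real.log (px / (qx * c)) = Real.log (px / qx) - Real.log c := by
      rw [div_mul_eq_div_div, Real.log_div (by positivity) (ne_of_gt hc)]
    have hinv : (px / (qx * c))⁻¹ = qx * c / px := by
      field_simp
    rw [hlog, hinv] at key
    have := mul_le_mul_of_nonneg_left key (le_of_lt hpos)
    have hxx : px * (1 - qx * c / px) = px - qx * c := by
      field_simp
    rw [hxx, mul_sub] at this
    linarith

/-- Log-sum inequality over a finset. -/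
lemma log_sum_ineq {α : Type*} (s : Finset α) (p q : α → ℝ)
    (hp : ∀ x, 0 ≤ p x) (hq : ∀ x, 0 ≤ q x)
    (hac : ∀ x, q x = 0 → p x = 0)
    (ha : 0 < ∑ x ∈ s, p x) (hb : 0 < ∑ x ∈ s, q x) :
    (∑ x ∈ s, p x) * Real.log ((∑ x ∈ s, p x) / (∑ x ∈ s, q x))
      ≤ ∑ x ∈ s, p x * Real.log (p x / q x) := by
  set a := ∑ x ∈ s, p x
  set b := ∑ x ∈ s, q x
  have hc : 0 < a / b := by positivity
  have key : ∑ x ∈ s, (p x * Real.log (a / b) + p x - q x * (a / b))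
      ≤ ∑ x ∈ s, p x * Real.log (p x / q x) :=
    Finset.sum_le_sum fun x _ => term_ineq (p x) (q x) (a / b) (hp x) (hq x) (hac x) hc
  have hsum : ∑ x ∈ s, (p x * Real.log (a / b) + p x - q x * (a / b))
      = a * Real.log (a / b) + a - b * (a / b) := by
    rw [Finset.sum_sub_distrib, Finset.sum_add_distrib, ← Finset.sum_mul, ← Finset.sum_mul]
  rw [hsum] at key
  have : b * (a / b) = a := by field_simp
  linarith

/-- `x log x ≥ -1/e` for `x ≥ 0`. -/
lemma mul_log_ge {x : ℝ} (hx : 0 ≤ x) : -(1 / Real.exp 1) ≤ x * Real.log x := by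
  rcases eq_or_lt_of_le hx with h0 | hpos
  · rw [← h0]; simp; positivity
  · have ht : 0 < (Real.exp 1 * x)⁻¹ := by positivity
    have key := Real.log_le_sub_one_of_pos ht
    rw [Real.log_inv, Real.log_mul (by positivity) (ne_of_gt hpos), Real.log_exp] at key
    have := mul_le_mul_of_nonneg_left key (le_of_lt hpos)
    have hxx : x * ((Real.exp 1 * x)⁻¹ - 1) = 1 / Real.exp 1 - x := by
      field_simp
    rw [hxx] at this
    nlinarith [Real.exp_pos 1]

/-- Let `p, q` be probability measures on a finite space, absolutely continuous so the
KL divergence `κ = Σ_x p(x) log(p(x)/q(x))` is finite. Then for any event `E`,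
`q(E) ≥ p(E) · exp(−(κ + 1/e)/p(E))` (trivially when `p(E) = 0`). -/
theorem stmt_16 {α : Type*} [Fintype α] (p q : α → ℝ)
    (hp : ∀ x, 0 ≤ p x) (hq : ∀ x, 0 ≤ q x)
    (hp1 : ∑ x, p x = 1) (hq1 : ∑ x, q x = 1)
    (hac : ∀ x, q x = 0 → p x = 0)
    (κ : ℝ) (hκ : κ = ∑ x, p x * Real.log (p x / q x))
    (E : Finset α) :
    (∑ x ∈ E, p x) * Real.exp (-((κ + 1 / Real.exp 1) / (∑ x ∈ E, p x)))
      ≤ ∑ x ∈ E, q x := by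
  classical
  set a := ∑ x ∈ E, p x with ha_def
  set b := ∑ x ∈ E, q x with hb_def
  have hb0 : 0 ≤ b := Finset.sum_nonneg fun x _ => hq x
  rcases eq_or_lt_of_le (Finset.sum_nonneg fun x _ => hp x : 0 ≤ a) with h0 | hapos
  · have : a = 0 := h0.symm
    rw [this]; simpa using hb0
  -- b > 0
  have hbpos : 0 < b := by
    rcases eq_or_lt_of_le hb0 with h0 | h; swap; · exact h
    exfalso
    have hq0 : ∀ x ∈ E, q x = 0 := by
      intro x hx
      have := (Finset.sum_eq_zero_iff_of_nonneg fun x _ => hq x).mp h0.symm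
      exact this x hx
    have : a = 0 := Finset.sum_eq_zero fun x hx => hac x (hq0 x hx)
    linarith
  -- split κ
  have hsplit : κ = (∑ x ∈ E, p x * Real.log (p x / q x))
      + ∑ x ∈ Eᶜ, p x * Real.log (p x / q x) := by
    rw [hκ, ← Finset.sum_add_sum_compl E]
  -- bound on E
  have hE : a * Real.log (a / b) ≤ ∑ x ∈ E, p x * Real.log (p x / q x) :=
    log_sum_ineq E p q hp hq hac hapos hbpos
  -- bound on complement
  have hEc : -(1 / Real.exp 1) ≤ ∑ x ∈ Eᶜ, p x * Real.log (p x / q x) := by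
    set a' := ∑ x ∈ Eᶜ, p x with ha'
    set b' := ∑ x ∈ Eᶜ, q x with hb'
    have ha'0 : 0 ≤ a' := Finset.sum_nonneg fun x _ => hp x
    rcases eq_or_lt_of_le ha'0 with h0 | ha'pos
    · have : ∀ x ∈ Eᶜ, p x * Real.log (p x / q x) = 0 := by
        intro x hx
        have := (Finset.sum_eq_zero_iff_of_nonneg fun x _ => hp x).mp h0.symm
        rw [this x hx]; ring
      rw [Finset.sum_eq_zero this]
      exact neg_nonpos.mpr (by positivity)
    · have hb'pos : 0 < b' := by
        rcases eq_or_lt_of_le (Finset.sum_nonneg fun x _ => hq x : 0 ≤ b') with h0 | h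
        swap; · exact h
        exfalso
        have : a' = 0 := Finset.sum_eq_zero fun x hx =>
          hac x ((Finset.sum_eq_zero_iff_of_nonneg fun x _ => hq x).mp h0.symm x hx)
        linarith
      have key := log_sum_ineq Eᶜ p q hp hq hac ha'pos hb'pos
      have hb'le : b' ≤ 1 := by
        rw [← hq1, ← Finset.sum_add_sum_compl E q]
        simp only [← hb_def, ← hb']
        linarith
      have hlogb' : Real.log b' ≤ 0 := Real.log_nonpos (le_of_lt hb'pos) hb'le
      have h1 : a' * Real.log a' ≤ a' * Real.log (a' / b') := by
        rw [Real.log_div (ne_of_gt ha'pos) (ne_of_gt hb'pos)]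
        nlinarith
      have h2 := mul_log_ge (le_of_lt ha'pos)
      linarith
  -- combine
  have hmain : a * Real.log (a / b) ≤ κ + 1 / Real.exp 1 := by
    rw [hsplit]; linarith
  have hlog : Real.log (a / b) ≤ (κ + 1 / Real.exp 1) / a :=
    (le_div_iff₀ hapos).mpr (by linarith [hmain, mul_comm a (Real.log (a/b))])
  have hexp : Real.exp (-((κ + 1 / Real.exp 1) / a)) ≤ b / a := by
    have : -((κ + 1 / Real.exp 1) / a) ≤ Real.log (b / a) := by
      rw [Real.log_div (ne_of_gt hbpos) (ne_of_gt hapos)]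
      rw [Real.log_div (ne_of_gt hapos) (ne_of_gt hbpos)] at hlog
      linarith
    calc Real.exp (-((κ + 1 / Real.exp 1) / a)) ≤ Real.exp (Real.log (b / a)) :=
          Real.exp_le_exp.mpr this
      _ = b / a := Real.exp_log (by positivity)
  calc a * Real.exp (-((κ + 1 / Real.exp 1) / a)) ≤ a * (b / a) :=
        mul_le_mul_of_nonneg_left hexp (le_of_lt hapos)
    _ = b := by have ha0 : a ≠ 0 := ne_of_gt hapos; field_simp
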